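/- The monoid M = Mon⟨a,b | ab=ba, aa=bb⟩ is left-cancellative. -/

import Mathlib

/-- The relations of the monoid `Mon⟨a,b | ab = ba, aa = bb⟩` on the free monoid
over two generators `a = 0`, `b = 1`. -/
def abRels : FreeMonoid (Fin 2) → FreeMonoid (Fin 2) → Prop := fun x y =>
  (x = FreeMonoid.of 0 * FreeMonoid.of 1 ∧ y = FreeMonoid.of 1 * FreeMonoid.of 0) ∨
  (x = FreeMonoid.of 0 * FreeMonoid.of 0 ∧ y = FreeMonoid.of 1 * FreeMonoid.of 1)

/-- Carry for the normal-form monoid. -/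
def abCarry (e f : ZMod 2) : ℕ := if e = 1 ∧ f = 1 then 2 else 0

lemma abCarry_assoc : ∀ e f g : ZMod 2,
    abCarry e f + abCarry (e + f) g = abCarry f g + abCarry e (f + g) := by decide

lemma abCarry_zero_left : ∀ e : ZMod 2, abCarry 0 e = 0 := by decide

lemma abCarry_zero_right : ∀ e : ZMod 2, abCarry e 0 = 0 := by decide

/-- Normal-form monoid: `a^n b^e`. -/
structure AbNF where
  n : ℕ
  e : ZMod 2
deriving DecidableEq

instance : Mul AbNF := ⟨fun x y => ⟨x.n + y.n + abCarry x.e y.e, x.e + y.e⟩⟩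

lemma AbNF.mul_def (x y : AbNF) :
    x * y = ⟨x.n + y.n + abCarry x.e y.e, x.e + y.e⟩ := rfl

instance : Monoid AbNF where
  one := ⟨0, 0⟩
  mul_assoc := by
    rintro ⟨m, e⟩ ⟨n, f⟩ ⟨p, g⟩
    have := abCarry_assoc e f g
    simp only [AbNF.mul_def, AbNF.mk.injEq]
    exact ⟨by omega, add_assoc e f g⟩
  one_mul := by
    rintro ⟨n, e⟩
    show AbNF.mk 0 0 * AbNF.mk n e = AbNF.mk n e
    simp [AbNF.mul_def, abCarry_zero_left]
  mul_one := by
    rintro ⟨n, e⟩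
    show AbNF.mk n e * AbNF.mk 0 0 = AbNF.mk n e
    simp [AbNF.mul_def, abCarry_zero_right]

lemma AbNF.left_cancel (x y y' : AbNF) (h : x * y = x * y') : y = y' := by
  obtain ⟨m, e⟩ := x; obtain ⟨n, f⟩ := y; obtain ⟨n', f'⟩ := y'
  simp only [AbNF.mul_def, AbNF.mk.injEq] at h
  obtain ⟨h1, h2⟩ := h
  have hf : f = f' := by
    have := add_left_cancel h2
    exact this
  subst hf
  congr 1
  omega

/-- Images of the generators. -/
def abGen (c : Fin 2) : AbNF := if c = 0 then ⟨1, 0⟩ else ⟨0, 1⟩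

lemma abRels_respected : ∀ x y : FreeMonoid (Fin 2), abRels x y →
    FreeMonoid.lift abGen x = FreeMonoid.lift abGen y := by
  rintro x y (⟨rfl, rfl⟩ | ⟨rfl, rfl⟩) <;>
    simp only [map_mul, FreeMonoid.lift_eval_of, abGen] <;> decide

/-- The hom to the normal-form monoid. -/
def abHom : PresentedMonoid abRels →* AbNF := PresentedMonoid.lift abGen abRels_respected

local notation "A" => PresentedMonoid.of abRels 0
local notation "B" => PresentedMonoid.of abRels 1

lemma rel_AB : A * B = B * A :=
  Quotient.sound (ConGen.Rel.of _ _ (Or.inl ⟨rfl, rfl⟩))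

lemma rel_AA : A * A = B * B :=
  Quotient.sound (ConGen.Rel.of _ _ (Or.inr ⟨rfl, rfl⟩))

lemma B_comm_pow (n : ℕ) : B * A ^ n = A ^ n * B := by
  induction n with
  | zero => simp
  | succ k ih =>
    rw [pow_succ, ← mul_assoc, ih, mul_assoc, ← rel_AB, ← mul_assoc]

/-- Section of `abHom`. -/
def abSec (x : AbNF) : PresentedMonoid abRels := A ^ x.n * B ^ x.e.val

lemma abSec_gen_mul (c : Fin 2) (y : AbNF) :
    abSec (abGen c * y) = PresentedMonoid.of abRels c * abSec y := by
  obtain ⟨n, e⟩ := y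
  fin_cases c
  · show abSec (⟨1, 0⟩ * ⟨n, e⟩) = A * abSec ⟨n, e⟩
    simp only [AbNF.mul_def, abCarry_zero_left, abSec]
    rw [show (1 : ℕ) + n + 0 = n + 1 by omega, pow_succ', zero_add]
    rw [mul_assoc]
  · show abSec (⟨0, 1⟩ * ⟨n, e⟩) = B * abSec ⟨n, e⟩
    have he : e = 0 ∨ e = 1 := by revert e; decide
    rcases he with rfl | rfl
    · show abSec ⟨0 + n + abCarry 1 0, 1 + 0⟩ = B * (A ^ n * (B : PresentedMonoid abRels) ^ (0 : ZMod 2).val)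
      rw [abCarry_zero_right]
      show A ^ (0 + n + 0) * B ^ (1 : ZMod 2).val = B * (A ^ n * B ^ (0 : ZMod 2).val)
      simp only [Nat.zero_add, Nat.add_zero, show ((1 : ZMod 2)).val = 1 from rfl,
        show ((0 : ZMod 2)).val = 0 from rfl, pow_one, pow_zero, mul_one]
      exact (B_comm_pow n).symm
    · show A ^ (0 + n + abCarry 1 1) * B ^ ((1 : ZMod 2) + 1).val
        = B * (A ^ n * B ^ (1 : ZMod 2).val)
      have h1 : abCarry 1 1 = 2 := rfl
      have h2 : ((1 : ZMod 2) + 1) = 0 := rfl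
      rw [h1, h2]
      simp only [show ((1 : ZMod 2)).val = 1 from rfl, show ((0 : ZMod 2)).val = 0 from rfl,
        pow_one, pow_zero, mul_one, Nat.zero_add]
      rw [← mul_assoc, B_comm_pow, mul_assoc, ← rel_AA, pow_add, pow_two]

lemma abSec_abHom (x : PresentedMonoid abRels) : abSec (abHom x) = x := by
  induction x with
  | h w =>
    induction w using FreeMonoid.inductionOn' with
    | one =>
      show abSec 1 = 1
      show A ^ (0 : ℕ) * B ^ (0 : ZMod 2).val = 1
      simp [show ((0 : ZMod 2)).val = 0 from rfl]
    | of_mul c w ih =>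
      rw [map_mul, map_mul]
      have : abHom (PresentedMonoid.mk abRels (FreeMonoid.of c)) = abGen c := rfl
      rw [this, abSec_gen_mul c _, ih]
      rfl

/-- The monoid `M = Mon⟨a,b | ab = ba, aa = bb⟩` is left-cancellative. -/
theorem leftCancellative_abMonoid :
    ∀ x y y' : PresentedMonoid abRels, x * y = x * y' → y = y' := by
  intro x y y' h
  have h2 : abHom x * abHom y = abHom x * abHom y' := by
    rw [← map_mul, ← map_mul, h]
  have h3 := AbNF.left_cancel _ _ _ h2
  calc y = abSec (abHom y) := (abSec_abHom y).symm
    _ = abSec (abHom y') := by rw [h3]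
    _ = y' := abSec_abHom y'
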